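/- Let V be a normal supervisor on the plant G, let the attack constraint be normal (Σ_{c,A} ⊆ Σ_{o,A}), and suppose AP_dmg ≠ ∅. Then for any enabling attacker A, A is successful if and only if there exists a non-empty set B ⊆ AP_dmg such that L(V_A/G) = L(V/G) ∪ ⋃_{(s,σ)∈B} En(s, σ). -/
import Mathlib


open scoped Classical

namespace ActuatorAttack

variable {A : Type*}

/-- Natural projection onto a sub-alphabet `S`: erase the letters not in `S`. -/
noncomputable def proj (S : Set A) (l : List A) : List A :=
  l.filter (fun a => decide (a ∈ S))

/-- The least language containing `ε` and closed under appending an event `σ`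
allowed by `allow` at `s`, provided the result lies in the plant language `LG`. -/
inductive Lang (LG : Set (List A)) (allow : List A → Set A) : List A → Prop
  | nil : Lang LG allow []
  | snoc {s : List A} {σ : A} : Lang LG allow s → σ ∈ allow s →
      (s ++ [σ]) ∈ LG → Lang LG allow (s ++ [σ])

/-- The closed-loop language `L(V/G)`. -/
def LVG (LG : Set (List A)) (So : Set A) (V : List A → Set A) :
    Set (List A) :=
  {s | Lang LG (fun t => V (proj So t)) s}

/-- Auxiliary function for the attacker-observation map: `pre` is the prefix
of the supervisor observation sequence already processed. -/
noncomputable def phatAux (V : List A → Set A) (SoA : Set A) :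
    List A → List A → List (List A × Set A)
  | _, [] => []
  | pre, σ :: rest =>
      (proj SoA [σ], V (pre ++ [σ])) :: phatAux V SoA (pre ++ [σ]) rest

/-- The attacker-observation map `P̂`: the i-th letter of `P̂(σ₁⋯σₙ)` is
`(P_{o,A}(σᵢ), V(σ₁⋯σᵢ))`. -/
noncomputable def phat (V : List A → Set A) (SoA : Set A) (w : List A) :
    List (List A × Set A) :=
  phatAux V SoA [] w

/-- The attacked supervisor `V_A`. -/
noncomputable def VA (V : List A → Set A) (ScA SoA : Set A)
    (Att : List (List A × Set A) → Set A) (w : List A) : Set A :=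
  (V w \ ScA) ∪ Att (phat V SoA w)

/-- The attacked closed-loop language `L(V_A/G)`. -/
def LVAG (LG : Set (List A)) (So : Set A) (V : List A → Set A)
    (ScA SoA : Set A) (Att : List (List A × Set A) → Set A) : Set (List A) :=
  {s | Lang LG (fun t =>
      {σ | proj So t ∈ proj So '' LVG LG So V ∧
           σ ∈ VA V ScA SoA Att (proj So t)}) s}

/-- An attacker is enabling if it enables every attackable event enabled by
the supervisor. -/
def Enabling (LG : Set (List A)) (So : Set A) (V : List A → Set A)
    (ScA SoA : Set A) (Att : List (List A × Set A) → Set A) : Prop :=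
  ∀ w ∈ proj So '' LVG LG So V, V w ∩ ScA ⊆ Att (phat V SoA w)

/-- An attacker is successful if the attacked closed-loop language meets the
damage set, and everything outside `P_o⁻¹(P_o(L(V/G)))` lies in `L_dmg·Σ*`. -/
def Successful (LG : Set (List A)) (So : Set A) (V : List A → Set A)
    (ScA SoA : Set A) (Att : List (List A × Set A) → Set A)
    (Ldmg : Set (List A)) : Prop :=
  (LVAG LG So V ScA SoA Att ∩ Ldmg).Nonempty ∧
  LVAG LG So V ScA SoA Att \ (proj So ⁻¹' (proj So '' LVG LG So V)) ⊆
    {t | ∃ d ∈ Ldmg, d <+: t}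

/-- `(s, σ)` is an attack pair. -/
def AttackPair (LG : Set (List A)) (So : Set A) (V : List A → Set A)
    (ScA SoA : Set A) (Ldmg : Set (List A)) (s : List A) (σ : A) : Prop :=
  s ∈ LVG LG So V ∧ σ ∈ ScA ∧ s ++ [σ] ∈ Ldmg ∧
  ∀ s' ∈ LVG LG So V,
    phat V SoA (proj So s) = phat V SoA (proj So s') →
    s' ++ [σ] ∈ LG → s' ++ [σ] ∈ Ldmg

/-- `En(s, σ)`: one-step `σ`-extensions in `L(G)` of strings of `L(V/G)` that
are attacker-observation equivalent to `s`. -/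
def En (LG : Set (List A)) (So : Set A) (V : List A → Set A)
    (SoA : Set A) (s : List A) (σ : A) : Set (List A) :=
  {t | ∃ s' ∈ LVG LG So V, t = s' ++ [σ] ∧ t ∈ LG ∧
       phat V SoA (proj So s) = phat V SoA (proj So s')}

/-- `I(ŵ)`: attackable events `σ` such that some string `s'` of `L(V/G)` with
attacker observation `ŵ` forms an attack pair `(s', σ)`. -/
def ISet (LG : Set (List A)) (So : Set A) (V : List A → Set A)
    (ScA SoA : Set A) (Ldmg : Set (List A))
    (w : List (List A × Set A)) : Set A :=
  {σ | σ ∈ ScA ∧ ∃ s' ∈ LVG LG So V,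
        phat V SoA (proj So s') = w ∧ AttackPair LG So V ScA SoA Ldmg s' σ}

/-- The supremal attacker `A^sup`. -/
def Asup (LG : Set (List A)) (So : Set A) (V : List A → Set A)
    (ScA SoA : Set A) (Ldmg : Set (List A))
    (w : List (List A × Set A)) : Set A :=
  {σ | ∃ s ∈ LVG LG So V, phat V SoA (proj So s) = w ∧
        σ ∈ V (proj So s) ∩ ScA} ∪
  ISet LG So V ScA SoA Ldmg w


lemma proj_append (S : Set A) (l l' : List A) :
    proj S (l ++ l') = proj S l ++ proj S l' := List.filter_append _ _

lemma proj_singleton_mem {S : Set A} {a : A} (h : a ∈ S) : proj S [a] = [a] := by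
  simp [proj, h]

lemma proj_singleton_not_mem {S : Set A} {a : A} (h : a ∉ S) : proj S [a] = [] := by
  simp [proj, h]

lemma lang_prefix {LG : Set (List A)} {allow : List A → Set A} {t : List A}
    (h : Lang LG allow t) : ∀ s, s <+: t → Lang LG allow s := by
  induction h with
  | nil => intro s hs; rw [List.prefix_nil] at hs; exact hs ▸ Lang.nil
  | snoc h1 h2 h3 ih =>
    intro s hs
    rcases List.prefix_concat_iff.1 hs with rfl | hs
    · exact Lang.snoc h1 h2 h3
    · exact ih s hs

lemma lang_snoc_inv {LG : Set (List A)} {allow : List A → Set A} {u : List A} {σ : A}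
    (h : Lang LG allow (u ++ [σ])) : Lang LG allow u ∧ σ ∈ allow u := by
  generalize hE : u ++ [σ] = t at h
  cases h with
  | nil => exact absurd hE (by simp)
  | @snoc s τ h1 h2 h3 =>
    obtain ⟨h4, h5⟩ := List.append_inj' hE rfl
    have h6 : σ = τ := by simpa using h5
    subst h4; subst h6
    exact ⟨h1, h2⟩

lemma phatAux_eq_V (V : List A → Set A) (SoA : Set A) :
    ∀ (w w' pre pre' : List A),
      phatAux V SoA pre w = phatAux V SoA pre' w' →
      (w = [] ∧ w' = []) ∨ V (pre ++ w) = V (pre' ++ w') := by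
  intro w
  induction w with
  | nil =>
    intro w' pre pre' h
    cases w' with
    | nil => exact Or.inl ⟨rfl, rfl⟩
    | cons b m => simp [phatAux] at h
  | cons a l ih =>
    intro w' pre pre' h
    cases w' with
    | nil => simp [phatAux] at h
    | cons b m =>
      simp only [phatAux, List.cons.injEq, Prod.mk.injEq] at h
      rcases ih m (pre ++ [a]) (pre' ++ [b]) h.2 with ⟨rfl, rfl⟩ | heq
      · exact Or.inr (by simpa using h.1.2)
      · exact Or.inr (by simpa using heq)

lemma phat_V_eq {V : List A → Set A} {SoA : Set A} {w w' : List A}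
    (h : phat V SoA w = phat V SoA w') : V w = V w' := by
  rcases phatAux_eq_V V SoA w w' [] [] h with ⟨rfl, rfl⟩ | heq
  · rfl
  · simpa using heq

lemma proj_last_obs {LG : Set (List A)} {So : Set A} {V : List A → Set A} {v : List A}
    (hv : v ∈ LVG LG So V) :
    ∀ w σ, σ ∈ So → proj So v = w ++ [σ] → σ ∈ V w := by
  simp only [LVG, Set.mem_setOf_eq] at hv
  induction hv with
  | nil => intro w σ _ h; exact absurd h (by simp [proj])
  | @snoc s τ hs hτ hG ih =>
    intro w σ hσ h
    rw [proj_append] at h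
    by_cases hτo : τ ∈ So
    · rw [proj_singleton_mem hτo] at h
      obtain ⟨h1, h2⟩ := List.append_inj' h rfl
      have h3 : τ = σ := by simpa using h2
      subst h3
      rw [← h1]
      exact hτ
    · rw [proj_singleton_not_mem hτo, List.append_nil] at h
      exact ih w σ hσ h

lemma not_proj_mem_image {LG : Set (List A)} {So : Set A} {V : List A → Set A}
    {u : List A} {σ : A} (hσ : σ ∈ So) (hnV : σ ∉ V (proj So u)) :
    proj So u ++ [σ] ∉ proj So '' LVG LG So V := by
  rintro ⟨v, hv, hpv⟩
  exact hnV (proj_last_obs hv (proj So u) σ hσ hpv)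

lemma lvg_subset_lvag {LG : Set (List A)} {So : Set A} {V : List A → Set A}
    {ScA SoA : Set A} {Att : List (List A × Set A) → Set A}
    (hen : Enabling LG So V ScA SoA Att) :
    LVG LG So V ⊆ LVAG LG So V ScA SoA Att := by
  intro s hs
  simp only [LVG, Set.mem_setOf_eq] at hs
  induction hs with
  | nil => exact Lang.nil
  | @snoc s σ hs hσ hG ih =>
    refine Lang.snoc ih ⟨⟨s, hs, rfl⟩, ?_⟩ hG
    by_cases hc : σ ∈ ScA
    · exact Set.mem_union_right _ (hen _ ⟨s, hs, rfl⟩ ⟨hσ, hc⟩)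
    · exact Set.mem_union_left _ ⟨hσ, hc⟩

lemma lvag_struct {LG : Set (List A)} {So : Set A} {V : List A → Set A}
    {ScA SoA : Set A} {Att : List (List A × Set A) → Set A}
    (hAtt : ∀ x, Att x ⊆ ScA) (hScASo : ScA ⊆ So)
    {t : List A} (ht : t ∈ LVAG LG So V ScA SoA Att) :
    t ∈ LVG LG So V ∨ ∃ u σ, t = u ++ [σ] ∧ u ∈ LVG LG So V ∧
      σ ∉ V (proj So u) ∧ σ ∈ Att (phat V SoA (proj So u)) ∧ t ∈ LG := by
  simp only [LVAG, Set.mem_setOf_eq] at ht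
  induction ht with
  | nil => exact Or.inl Lang.nil
  | @snoc s σ hs hall hG ih =>
    obtain ⟨himg, hVA⟩ := hall
    rcases ih with hsL | ⟨u, τ, rfl, huL, hnV, hAttτ, hsG⟩
    · by_cases hv : σ ∈ V (proj So s)
      · exact Or.inl (Lang.snoc hsL hv hG)
      · refine Or.inr ⟨s, σ, rfl, hsL, hv, ?_, hG⟩
        rcases hVA with h | h
        · exact absurd h.1 hv
        · exact h
    · exfalso
      have hτo : τ ∈ So := hScASo (hAtt _ hAttτ)
      rw [proj_append, proj_singleton_mem hτo] at himg
      exact not_proj_mem_image hτo hnV himg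

/-- Suppose `AP_dmg ≠ ∅`. An enabling attacker `A` is
successful iff `L(V_A/G) = L(V/G) ∪ ⋃_{(s,σ)∈B} En(s,σ)` for some
non-empty `B ⊆ AP_dmg`. -/
theorem stmt_11 {A : Type*} [Fintype A] (So Sc : Set A) (LG : Set (List A))
    (hnil : [] ∈ LG) (hpref : ∀ s t : List A, s <+: t → t ∈ LG → s ∈ LG)
    (V : List A → Set A) (hV : ∀ w, Scᶜ ⊆ V w)
    (hnormV : Sc ⊆ So)
    (ScA SoA : Set A) (hcA : ScA ⊆ Sc) (hoA : SoA ⊆ So)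
    (hnormA : ScA ⊆ SoA)
    (Ldmg : Set (List A)) (hLd : Ldmg ⊆ LG)
    (hLdV : Ldmg ∩ LVG LG So V = ∅)
    (hAP : ∃ s σ, AttackPair LG So V ScA SoA Ldmg s σ)
    (Att : List (List A × Set A) → Set A) (hAtt : ∀ x, Att x ⊆ ScA)
    (hen : Enabling LG So V ScA SoA Att) :
    Successful LG So V ScA SoA Att Ldmg ↔
      ∃ B : Set (List A × A), B.Nonempty ∧
        (∀ p ∈ B, AttackPair LG So V ScA SoA Ldmg p.1 p.2) ∧
        LVAG LG So V ScA SoA Att =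
          LVG LG So V ∪ ⋃ p ∈ B, En LG So V SoA p.1 p.2 := by
  have hScASo : ScA ⊆ So := fun a ha => hoA (hnormA ha)
  constructor
  · rintro ⟨⟨t0, ht0A, ht0d⟩, hsub⟩
    have key : ∀ u σ, u ∈ LVG LG So V → σ ∉ V (proj So u) →
        σ ∈ Att (phat V SoA (proj So u)) → u ++ [σ] ∈ LG → u ++ [σ] ∈ Ldmg := by
      intro u σ huL hnV hA hG
      have hσo : σ ∈ So := hScASo (hAtt _ hA)
      have hin : u ++ [σ] ∈ LVAG LG So V ScA SoA Att :=
        Lang.snoc (lvg_subset_lvag hen huL)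
          ⟨⟨u, huL, rfl⟩, Set.mem_union_right _ hA⟩ hG
      have hnp : u ++ [σ] ∉ proj So ⁻¹' (proj So '' LVG LG So V) := by
        intro hmem
        rw [Set.mem_preimage, proj_append, proj_singleton_mem hσo] at hmem
        exact not_proj_mem_image hσo hnV hmem
      obtain ⟨d, hd, hdp⟩ := hsub ⟨hin, hnp⟩
      rcases List.prefix_concat_iff.1 hdp with rfl | hdp'
      · exact hd
      · exact (Set.eq_empty_iff_forall_notMem.1 hLdV d
          ⟨hd, lang_prefix huL d hdp'⟩).elim
    refine ⟨{p : List A × A | p.1 ∈ LVG LG So V ∧ p.2 ∉ V (proj So p.1) ∧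
        p.2 ∈ Att (phat V SoA (proj So p.1)) ∧ p.1 ++ [p.2] ∈ LG}, ?_, ?_, ?_⟩
    · rcases lvag_struct hAtt hScASo ht0A with h | ⟨u, σ, rfl, huL, hnV, hA, hG⟩
      · exact (Set.eq_empty_iff_forall_notMem.1 hLdV t0 ⟨ht0d, h⟩).elim
      · exact ⟨(u, σ), huL, hnV, hA, hG⟩
    · rintro ⟨u, σ⟩ ⟨huL, hnV, hA, hG⟩
      refine ⟨huL, hAtt _ hA, key u σ huL hnV hA hG, ?_⟩
      intro s' hs' heq hG'
      have hVeq : V (proj So u) = V (proj So s') := phat_V_eq heq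
      exact key s' σ hs' (hVeq ▸ hnV) (heq ▸ hA) hG'
    · ext t
      constructor
      · intro ht
        rcases lvag_struct hAtt hScASo ht with h | ⟨u, σ, rfl, huL, hnV, hA, hG⟩
        · exact Set.mem_union_left _ h
        · refine Set.mem_union_right _ (Set.mem_biUnion
            (show (u, σ) ∈ {p : List A × A | p.1 ∈ LVG LG So V ∧
              p.2 ∉ V (proj So p.1) ∧ p.2 ∈ Att (phat V SoA (proj So p.1)) ∧
              p.1 ++ [p.2] ∈ LG} from ⟨huL, hnV, hA, hG⟩)
            (show u ++ [σ] ∈ En LG So V SoA u σ from ⟨u, huL, rfl, hG, rfl⟩))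
      · rintro (h | h)
        · exact lvg_subset_lvag hen h
        · rw [Set.mem_iUnion₂] at h
          obtain ⟨p, hpB, s', hs', rfl, hG, heq⟩ := h
          exact Lang.snoc (lvg_subset_lvag hen hs')
            ⟨⟨s', hs', rfl⟩, Set.mem_union_right _ (heq ▸ hpB.2.2.1)⟩ hG
  · rintro ⟨B, ⟨p0, hp0⟩, hBAP, hEq⟩
    obtain ⟨hp1, hp2, hp3, hp4⟩ := hBAP p0 hp0
    constructor
    · refine ⟨p0.1 ++ [p0.2], ?_, hp3⟩
      rw [hEq]
      exact Set.mem_union_right _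
        (Set.mem_biUnion hp0 (show p0.1 ++ [p0.2] ∈ En LG So V SoA p0.1 p0.2
          from ⟨p0.1, hp1, rfl, hLd hp3, rfl⟩))
    · rintro t ⟨htA, htn⟩
      rw [hEq] at htA
      rcases htA with h | h
      · exact (htn (show t ∈ proj So ⁻¹' (proj So '' LVG LG So V)
          from ⟨t, h, rfl⟩)).elim
      · rw [Set.mem_iUnion₂] at h
        obtain ⟨p, hpB, s', hs', rfl, hG, heq⟩ := h
        exact ⟨s' ++ [p.2], (hBAP p hpB).2.2.2 s' hs' heq hG, List.prefix_refl _⟩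


end ActuatorAttack
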